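/- Let D be a group and f, g : D → D maps satisfying f(a)f(b) = f(f(a)b) = f(a·g(b)) and g(a)g(b) = g(a·g(b)) = g(f(a)b) for all a, b ∈ D (an averaging pair). Define a ⊢ b := f(a)b and a ⊣ b := a·g(b). Then (D,⊢,⊣) is a disemigroup. If moreover there exists e ∈ D with f(e) = 1 = g(e), then (D,⊢,⊣) is a g-digroup whose set of bar-units is exactly {e ∈ D : f(e) = 1 and g(e) = 1}, and whose unilateral inverses are given by a^{I_e} = e·g(a)^{-1} and a^{J_e} = f(a)^{-1}·e for all bar-units e and a ∈ D. -/
import Mathlib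


/-- An element `e` is a *bar-unit* for the pair of operations `(⊢, ⊣)` if
`e ⊢ a = a = a ⊣ e` for all `a`. -/
def IsBarUnit {D : Type*} (vd dv : D → D → D) (e : D) : Prop :=
  ∀ a : D, vd e a = a ∧ dv a e = a

/-- Let `D` be a group and `(f, g)` an averaging pair on `D`, i.e.
`f(a)f(b) = f(f(a)b) = f(a·g(b))` and `g(a)g(b) = g(a·g(b)) = g(f(a)b)` for all `a b`.
With `a ⊢ b := f(a)·b` and `a ⊣ b := a·g(b)`, the structure `(D, ⊢, ⊣)` is a disemigroup.
If moreover some `e` satisfies `f(e) = 1 = g(e)` (compatibility), then `(D, ⊢, ⊣)` is a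
g-digroup whose bar-units are exactly `{e | f(e) = 1 ∧ g(e) = 1}`, and whose unilateral
inverses are `a^{I_e} = e·g(a)⁻¹` and `a^{J_e} = f(a)⁻¹·e`. -/
theorem averaging_pair_gdigroup {D : Type*} [Group D] (f g : D → D)
    (hf1 : ∀ a b : D, f a * f b = f (f a * b))
    (hf2 : ∀ a b : D, f a * f b = f (a * g b))
    (hg1 : ∀ a b : D, g a * g b = g (a * g b))
    (hg2 : ∀ a b : D, g a * g b = g (f a * b))
    (vd dv : D → D → D)
    (hvd : ∀ a b : D, vd a b = f a * b)
    (hdv : ∀ a b : D, dv a b = a * g b) :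
    ((∀ a b c : D, vd (vd a b) c = vd a (vd b c)) ∧
     (∀ a b c : D, dv (dv a b) c = dv a (dv b c)) ∧
     (∀ a b c : D, dv (vd a b) c = vd a (dv b c)) ∧
     (∀ a b c : D, dv a (vd b c) = dv a (dv b c)) ∧
     (∀ a b c : D, vd (vd a b) c = vd (dv a b) c)) ∧
    ((∃ e : D, f e = 1 ∧ g e = 1) →
      ((∃ e : D, IsBarUnit vd dv e) ∧
       (∀ e : D, IsBarUnit vd dv e ↔ (f e = 1 ∧ g e = 1)) ∧
       (∀ e a : D, IsBarUnit vd dv e →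
         (∀ x : D, dv x a = e ↔ x = e * (g a)⁻¹) ∧
         (∀ y : D, vd a y = e ↔ y = (f a)⁻¹ * e)))) := by
  refine ⟨⟨fun a b c => ?_, fun a b c => ?_, fun a b c => ?_, fun a b c => ?_,
    fun a b c => ?_⟩, ?_⟩
  · simp [hvd, ← hf1, mul_assoc]
  · simp [hdv, ← hg1, mul_assoc]
  · simp [hvd, hdv, mul_assoc]
  · simp [hdv, hvd, ← hg1, ← hg2, mul_assoc]
  · simp [hvd, hdv, ← hf1, ← hf2]
  rintro ⟨e, he1, he2⟩
  refine ⟨⟨e, fun a => by simp [hvd, hdv, he1, he2]⟩, fun u => ?_, fun u a _ => ?_⟩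
  · constructor
    · intro h
      have h1 := (h 1).1
      have h2 := (h 1).2
      simp [hvd, hdv] at h1 h2
      exact ⟨h1, h2⟩
    · rintro ⟨h1, h2⟩ a
      simp [hvd, hdv, h1, h2]
  · constructor
    · intro x
      simp [hdv]
      constructor
      · intro h; rw [← h]; group
      · intro h; rw [h]; group
    · intro y
      simp [hvd]
      constructor
      · intro h; rw [← h]; group
      · intro h; rw [h]; group
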